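/- Every fuzzy right ideal of an intra-regular AG-groupoid with left identity is fuzzy semiprime: μ(a) ≥ μ(a*a) for all a. -/
import Mathlib

/-- Every fuzzy right ideal of an intra-regular AG-groupoid with left
    identity is fuzzy semiprime. -/
theorem fuzzy_right_semiprime {S : Type*} (mul : S → S → S)
    (hinv : ∀ a b c : S, mul (mul a b) c = mul (mul c b) a)
    (e : S) (he : ∀ x : S, mul e x = x)
    (hintra : ∀ a : S, ∃ x y : S, a = mul (mul x (mul a a)) y)
    (μ : S → ℝ) (hμ0 : ∀ x, 0 ≤ μ x) (hμ1 : ∀ x, μ x ≤ 1)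
    (hright : ∀ u v : S, μ u ≤ μ (mul u v)) :
    ∀ a : S, μ (mul a a) ≤ μ a := by
  intro a
  obtain ⟨x, y, ha⟩ := hintra a
  have key : mul x (mul a a) = mul (mul (mul a a) x) e := by
    rw [hinv, he]
  calc μ (mul a a) ≤ μ (mul (mul a a) x) := hright _ _
    _ ≤ μ (mul (mul (mul a a) x) e) := hright _ _
    _ = μ (mul x (mul a a)) := by rw [key]
    _ ≤ μ (mul (mul x (mul a a)) y) := hright _ _
    _ = μ a := by rw [← ha]
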